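/- Suppose t₁t₂ = −1 with −1 < t₁ < 0 < 1 < t₂, C, D are real with CD ≥ 0 and Ct₁ + D ≠ 0. Then for all sufficiently large m and all sufficiently small ε > 0, for every complex z with |z| = t₂ + ε, one has |z^{m+1}(t₁ − t₂)(C + Dz)| > |t₂^{m+1}(1 − z t₂)(Ct₁ + D) + t₁^{m+1}(z t₁ − 1)(Ct₂ + D)|. -/

import Mathlib

set_option maxHeartbeats 1000000

lemma key_abs (l r a b : ℝ) (hl0 : 0 < l) (hl1 : l ≤ 1) (hrl : 1 ≤ r * l)
    (hdom : |b| ≤ l * |a|) :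
    |a + l * b| * r + |l * a - b| ≤ |a| * (r + l) + |b| * (r * l - 1) := by
  have hr0 : 0 < r := by nlinarith
  rcases le_total 0 a with ha | ha <;> rcases le_total 0 b with hb | hb
  · rw [abs_of_nonneg ha, abs_of_nonneg hb] at *
    rw [abs_of_nonneg (by nlinarith : (0:ℝ) ≤ a + l * b),
        abs_of_nonneg (by nlinarith : (0:ℝ) ≤ l * a - b)]
    nlinarith
  · rw [abs_of_nonneg ha, abs_of_nonpos hb] at *
    rw [abs_of_nonneg (by nlinarith : (0:ℝ) ≤ a + l * b),
        abs_of_nonneg (by nlinarith : (0:ℝ) ≤ l * a - b)]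
    nlinarith [mul_nonneg (neg_nonneg.2 hb) (by nlinarith : (0:ℝ) ≤ r * l - 1)]
  · rw [abs_of_nonpos ha, abs_of_nonneg hb] at *
    rw [abs_of_nonpos (by nlinarith : a + l * b ≤ 0),
        abs_of_nonpos (by nlinarith : l * a - b ≤ 0)]
    nlinarith [mul_nonneg hb (by nlinarith : (0:ℝ) ≤ r * l - 1)]
  · rw [abs_of_nonpos ha, abs_of_nonpos hb] at *
    rw [abs_of_nonpos (by nlinarith : a + l * b ≤ 0),
        abs_of_nonpos (by nlinarith : l * a - b ≤ 0)]
    nlinarith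

lemma core (t₁ t₂ C D : ℝ) (hprod : t₁ * t₂ = -1) (h2 : t₁ < 0) (h3 : 1 < t₂)
    (hC : 0 ≤ C) (hD : 0 ≤ D) (hN : 0 < C * t₂ + D)
    (m : ℕ)
    (hdom : |t₁ ^ (m+1) * (C * t₂ + D)| ≤ (-t₁) * |t₂ ^ (m+1) * (D * t₂ - C)|)
    (ε : ℝ) (hε : 0 < ε) (z : ℂ) (hz : ‖z‖ = t₂ + ε) :
    ‖(t₂ : ℂ) ^ (m + 1) * (1 - z * t₂) * ((C : ℂ) * t₁ + D)
        + (t₁ : ℂ) ^ (m + 1) * (z * t₁ - 1) * ((C : ℂ) * t₂ + D)‖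
      ≤ t₂ ^ (m+1) * |D * t₂ - C| * ((t₂ + ε) + (-t₁))
        + (-t₁) ^ (m+1) * (C * t₂ + D) * (ε * (-t₁))
    ∧ ‖z ^ (m + 1) * ((t₁ : ℂ) - t₂) * ((C : ℂ) + D * z)‖
        = (t₂ + ε) ^ (m+1) * (t₂ + (-t₁)) * (‖(C : ℂ) + D * z‖)
    ∧ D * (t₂ + ε) - C ≤ ‖(C : ℂ) + D * z‖
    ∧ C - D * (t₂ + ε) ≤ ‖(C : ℂ) + D * z‖ := by
  have ht2 : (0:ℝ) < t₂ := by linarith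
  have hl0 : (0:ℝ) < -t₁ := by linarith
  have hlt2 : (-t₁) * t₂ = 1 := by linarith [hprod]
  have hl1 : -t₁ < 1 := by nlinarith
  have hc : (t₁ : ℂ) * (t₂ : ℂ) = -1 := by exact_mod_cast hprod
  refine ⟨?_, ?_, ?_, ?_⟩
  · -- RHS bound
    have hsum : (t₂ : ℂ) ^ (m + 1) * (1 - z * t₂) * ((C : ℂ) * t₁ + D)
        + (t₁ : ℂ) ^ (m + 1) * (z * t₁ - 1) * ((C : ℂ) * t₂ + D)
        = ((-(t₂ ^ (m+1) * (D * t₂ - C) + (-t₁) * (t₁ ^ (m+1) * (C * t₂ + D))) : ℝ) : ℂ) * z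
          + (((-t₁) * (t₂ ^ (m+1) * (D * t₂ - C)) - t₁ ^ (m+1) * (C * t₂ + D) : ℝ) : ℂ) := by
      push_cast
      linear_combination ((t₂ : ℂ) ^ (m+1) * ((D : ℂ) - C * z)) * hc
    rw [hsum]
    have habs_a : |t₂ ^ (m+1) * (D * t₂ - C)| = t₂ ^ (m+1) * |D * t₂ - C| := by
      rw [abs_mul, abs_pow, abs_of_pos ht2]
    have habs_b : |t₁ ^ (m+1) * (C * t₂ + D)| = (-t₁) ^ (m+1) * (C * t₂ + D) := by
      rw [abs_mul, abs_pow, abs_of_neg h2, abs_of_pos hN]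
    have hrl : 1 ≤ (t₂ + ε) * (-t₁) := by nlinarith
    calc ‖((-(t₂ ^ (m+1) * (D * t₂ - C) + (-t₁) * (t₁ ^ (m+1) * (C * t₂ + D))) : ℝ) : ℂ) * z
          + (((-t₁) * (t₂ ^ (m+1) * (D * t₂ - C)) - t₁ ^ (m+1) * (C * t₂ + D) : ℝ) : ℂ)‖
        ≤ ‖((-(t₂ ^ (m+1) * (D * t₂ - C) + (-t₁) * (t₁ ^ (m+1) * (C * t₂ + D))) : ℝ) : ℂ) * z‖
          + ‖(((-t₁) * (t₂ ^ (m+1) * (D * t₂ - C)) - t₁ ^ (m+1) * (C * t₂ + D) : ℝ) : ℂ)‖ :=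
        norm_add_le _ _
      _ = |t₂ ^ (m+1) * (D * t₂ - C) + (-t₁) * (t₁ ^ (m+1) * (C * t₂ + D))| * (t₂ + ε)
          + |(-t₁) * (t₂ ^ (m+1) * (D * t₂ - C)) - t₁ ^ (m+1) * (C * t₂ + D)| := by
        rw [norm_mul, Complex.norm_real, Real.norm_eq_abs, Complex.norm_real, Real.norm_eq_abs, hz, abs_neg]
      _ ≤ |t₂ ^ (m+1) * (D * t₂ - C)| * ((t₂ + ε) + (-t₁))
          + |t₁ ^ (m+1) * (C * t₂ + D)| * ((t₂ + ε) * (-t₁) - 1) :=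
        key_abs (-t₁) (t₂ + ε) _ _ hl0 hl1.le hrl hdom
      _ = t₂ ^ (m+1) * |D * t₂ - C| * ((t₂ + ε) + (-t₁))
          + (-t₁) ^ (m+1) * (C * t₂ + D) * (ε * (-t₁)) := by
        rw [habs_a, habs_b]
        have : (t₂ + ε) * (-t₁) - 1 = ε * (-t₁) := by nlinarith
        rw [this]
  · -- LHS equality
    have h1 : ((t₁ : ℂ) - t₂) = ((t₁ - t₂ : ℝ) : ℂ) := by push_cast; ring
    rw [norm_mul, norm_mul, norm_pow, hz, h1, Complex.norm_real, Real.norm_eq_abs,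
        abs_of_neg (show t₁ - t₂ < 0 by linarith)]
    ring
  · -- D(t₂+ε) - C ≤ |C+Dz|
    have t := norm_add_le ((C:ℂ) + D * z) (-(C:ℂ))
    have harg : ((C:ℂ) + D * z) + (-(C:ℂ)) = (D:ℂ) * z := by ring
    rw [harg, norm_neg, norm_mul, Complex.norm_real, Real.norm_eq_abs, Complex.norm_real, Real.norm_eq_abs, hz,
        abs_of_nonneg hD, abs_of_nonneg hC] at t
    linarith
  · -- C - D(t₂+ε) ≤ |C+Dz|
    have t := norm_add_le ((C:ℂ) + D * z) (-((D:ℂ) * z))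
    have harg : ((C:ℂ) + D * z) + (-((D:ℂ) * z)) = (C:ℂ) := by ring
    rw [harg, norm_neg, norm_mul, Complex.norm_real, Real.norm_eq_abs, Complex.norm_real, Real.norm_eq_abs, hz,
        abs_of_nonneg hD, abs_of_nonneg hC] at t
    linarith

lemma branchA_arith (t₂ l C D ε R T L1 K : ℝ)
    (hlt2 : l * t₂ = 1) (hl0 : 0 < l) (hl1 : l < 1) (ht2 : 1 < t₂)
    (hC : 0 ≤ C) (hD : 0 < D) (hε : 0 < ε)
    (hRT : T ≤ R) (hT2T : t₂ ≤ T)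
    (hL1p : 0 ≤ L1) (hL1 : L1 ≤ 1)
    (hG : 0 < D * t₂ - C)
    (hK : D * (t₂ + ε) - C ≤ K) :
    T * (D * t₂ - C) * ((t₂ + ε) + l) + L1 * (C * t₂ + D) * (ε * l)
      < R * (t₂ + l) * K := by
  have hT0 : 0 < T := by linarith
  have hR0 : 0 < R := by linarith
  have hCD0 : 0 < C + l * D := by positivity
  have hNid : C * t₂ + D = t₂ * (C + l * D) := by linear_combination D * hlt2.symm
  have q1 : L1 * l ≤ l := by nlinarith
  have q2 : L1 * l * t₂ ≤ l * t₂ := mul_le_mul_of_nonneg_right q1 (by linarith)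
  have hq : L1 * l * t₂ < T := by rw [hlt2] at q2; linarith
  have h5 : L1 * (C * t₂ + D) * (ε * l) = (L1 * l * t₂) * (ε * (C + l * D)) := by
    rw [hNid]; ring
  have h6 : (L1 * l * t₂) * (ε * (C + l * D)) < T * (ε * (C + l * D)) :=
    mul_lt_mul_of_pos_right hq (by positivity)
  have hKpos : (0:ℝ) ≤ D * (t₂ + ε) - C := by nlinarith
  have W2 : T * (t₂ + l) * (D * (t₂ + ε) - C) ≤ R * (t₂ + l) * (D * (t₂ + ε) - C) := by
    have := mul_le_mul_of_nonneg_right hRT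
      (mul_nonneg (by linarith : (0:ℝ) ≤ t₂ + l) hKpos)
    linarith
  have W1 : R * (t₂ + l) * (D * (t₂ + ε) - C) ≤ R * (t₂ + l) * K :=
    mul_le_mul_of_nonneg_left hK (by positivity)
  -- identity: T*(t₂+l)*(D*(t₂+ε)-C) = T*(D*t₂-C)*((t₂+ε)+l) + T*(ε*(C+l*D))
  have E1 : T * (t₂ + l) * (D * (t₂ + ε) - C)
      = T * (D * t₂ - C) * ((t₂ + ε) + l) + T * (ε * (C + l * D)) := by ring
  linarith [W1, W2, h5.le, h5.ge, h6]

lemma branchB_arith (t₂ l g N D ε R T L1 K μ : ℝ)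
    (hl0 : 0 < l) (hl1 : l ≤ 1) (ht2 : 1 < t₂) (hε : 0 < ε)
    (hg : 0 < g) (hN : 0 < N) (hD : 0 ≤ D) (hμ : 0 ≤ μ)
    (hT1 : 1 ≤ T) (hRT : T ≤ R)
    (hL1p : 0 ≤ L1) (hL1 : L1 ≤ 1)
    (F1 : T * ((t₂ + ε) + μ * ε) ≤ R * (t₂ + ε))
    (F2 : (D * (t₂ + l) + g + N + 1) * ((t₂ + ε) + μ * ε) ≤ g * μ * (t₂ + l))
    (hK : g - D * ε ≤ K) :
    T * g * ((t₂ + ε) + l) + L1 * N * (ε * l) < R * (t₂ + l) * K := by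
  have hT0 : (0:ℝ) < T := by linarith
  have hR0 : (0:ℝ) < R := by linarith
  have hSpos : (0:ℝ) < (t₂ + ε) + μ * ε := by positivity
  have E2 : ε * R * (g * μ - D * ((t₂ + ε) + μ * ε))
      ≤ (g * (R - T) - D * ε * R) * ((t₂ + ε) + μ * ε) := by
    nlinarith [mul_le_mul_of_nonneg_left F1 hg.le]
  have E3 : (g + N + 1) * ((t₂ + ε) + μ * ε)
      ≤ (t₂ + l) * (g * μ - D * ((t₂ + ε) + μ * ε)) := by nlinarith [F2]
  have E4a := mul_le_mul_of_nonneg_left E2 (by linarith : (0:ℝ) ≤ t₂ + l)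
  have E4b := mul_le_mul_of_nonneg_left E3 (by positivity : (0:ℝ) ≤ ε * R)
  have E4 : (ε * R * (g + N + 1)) * ((t₂ + ε) + μ * ε)
      ≤ ((t₂ + l) * (g * (R - T) - D * ε * R)) * ((t₂ + ε) + μ * ε) := by
    nlinarith [E4a, E4b]
  have E5 : ε * R * (g + N + 1) ≤ (t₂ + l) * (g * (R - T) - D * ε * R) :=
    le_of_mul_le_mul_right E4 hSpos
  have W2 : ε * T * (g + N + 1) ≤ (t₂ + l) * (g * (R - T) - D * ε * R) := by
    have := mul_le_mul_of_nonneg_left hRT (by positivity : (0:ℝ) ≤ ε * (g + N + 1))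
    linarith
  have u1 : L1 * l ≤ 1 := by nlinarith
  have u3 : (L1 * l) * (ε * N) ≤ 1 * (ε * N) :=
    mul_le_mul_of_nonneg_right u1 (by positivity)
  have u4 : ε * N < ε * T * (N + 1) := by
    have := mul_le_mul_of_nonneg_right hT1 (by positivity : (0:ℝ) ≤ ε * (N + 1))
    nlinarith
  have hsmall : L1 * N * (ε * l) < ε * T * (N + 1) := by nlinarith [u3, u4]
  have hKstep : R * (t₂ + l) * (g - D * ε) ≤ R * (t₂ + l) * K :=
    mul_le_mul_of_nonneg_left hK (by positivity)
  have E1 : R * (t₂ + l) * (g - D * ε)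
      = T * g * ((t₂ + ε) + l) + (t₂ + l) * (g * (R - T) - D * ε * R) - T * g * ε := by
    ring
  linarith [hKstep, W2, hsmall]

lemma aux (t₁ t₂ C D : ℝ) (hprod : t₁ * t₂ = -1)
    (h1 : -1 < t₁) (h2 : t₁ < 0) (h3 : 1 < t₂)
    (hC : 0 ≤ C) (hD : 0 ≤ D) (hG : D * t₂ - C ≠ 0) :
    ∃ M : ℕ, ∃ ε₀ > (0 : ℝ), ∀ m ≥ M, ∀ ε : ℝ, 0 < ε → ε < ε₀ →
      ∀ z : ℂ, ‖z‖ = t₂ + ε →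
        ‖z ^ (m + 1) * ((t₁ : ℂ) - t₂) * ((C : ℂ) + D * z)‖
          > ‖(t₂ : ℂ) ^ (m + 1) * (1 - z * t₂) * ((C : ℂ) * t₁ + D)
              + (t₁ : ℂ) ^ (m + 1) * (z * t₁ - 1) * ((C : ℂ) * t₂ + D)‖ := by
  have ht2 : (0:ℝ) < t₂ := by linarith
  have hl0 : (0:ℝ) < -t₁ := by linarith
  have hlt2 : -t₁ * t₂ = 1 := by linarith [hprod]
  have hl1 : -t₁ < 1 := by nlinarith
  have hN : 0 < C * t₂ + D := by
    rcases eq_or_lt_of_le (by positivity : (0:ℝ) ≤ C * t₂ + D) with h | h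
    · exfalso; apply hG
      have hC0 : C = 0 := by nlinarith
      have hD0 : D = 0 := by nlinarith
      rw [hC0, hD0]; ring
    · exact h
  have hGabs : 0 < |D * t₂ - C| := abs_pos.mpr hG
  obtain ⟨M₂, hM₂⟩ : ∃ n : ℕ, (C * t₂ + D) / |D * t₂ - C| < t₂ ^ n :=
    pow_unbounded_of_one_lt _ h3
  have hM₂' : C * t₂ + D < t₂ ^ M₂ * |D * t₂ - C| := by
    rw [div_lt_iff₀ hGabs] at hM₂; linarith
  have hdom : ∀ m : ℕ, M₂ ≤ m →
      |t₁ ^ (m+1) * (C * t₂ + D)| ≤ -t₁ * |t₂ ^ (m+1) * (D * t₂ - C)| := by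
    intro m hm
    have e1 : |t₁ ^ (m+1) * (C * t₂ + D)| = (-t₁) ^ (m+1) * (C * t₂ + D) := by
      rw [abs_mul, abs_pow, abs_of_neg h2, abs_of_pos hN]
    have e2 : |t₂ ^ (m+1) * (D * t₂ - C)| = t₂ ^ (m+1) * |D * t₂ - C| := by
      rw [abs_mul, abs_pow, abs_of_pos ht2]
    rw [e1, e2]
    have q1 : (-t₁) ^ m ≤ 1 := pow_le_one₀ hl0.le hl1.le
    have p2 : t₂ ^ M₂ ≤ t₂ ^ (m+1) := pow_le_pow_right₀ (by linarith) (by omega)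
    have p3 : C * t₂ + D ≤ t₂ ^ (m+1) * |D * t₂ - C| := by nlinarith
    have e3 : (-t₁) ^ (m+1) = (-t₁) ^ m * (-t₁) := pow_succ _ m
    calc (-t₁) ^ (m+1) * (C * t₂ + D) = (-t₁) ^ m * (-t₁ * (C * t₂ + D)) := by rw [e3]; ring
      _ ≤ 1 * (-t₁ * (C * t₂ + D)) := mul_le_mul_of_nonneg_right q1 (by positivity)
      _ = -t₁ * (C * t₂ + D) := by ring
      _ ≤ -t₁ * (t₂ ^ (m+1) * |D * t₂ - C|) := mul_le_mul_of_nonneg_left p3 hl0.le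
  rcases hG.lt_or_gt with hGneg | hGpos
  · -- Branch B : C - D*t₂ > 0
    have hg : 0 < C - D * t₂ := by linarith
    have hden : (0:ℝ) < (C - D * t₂) * (t₂ + -t₁) := by nlinarith
    have hΘ : (0:ℝ) < D * (t₂ + -t₁) + (C - D * t₂) + (C * t₂ + D) + 1 := by nlinarith
    obtain ⟨M₃, hM₃⟩ := exists_nat_gt
      (2 * (D * (t₂ + -t₁) + (C - D * t₂) + (C * t₂ + D) + 1) * (t₂ + 1) /
        ((C - D * t₂) * (t₂ + -t₁)))
    rw [div_lt_iff₀ hden] at hM₃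
    refine ⟨max M₂ M₃,
      min 1 ((C - D * t₂) * (t₂ + -t₁) / (2 * (D * (t₂ + -t₁) + (C - D * t₂) + (C * t₂ + D) + 1))),
      lt_min one_pos (by positivity), ?_⟩
    intro m hm ε hε hεlt z hz
    obtain ⟨hR, hL, hK1, hK2⟩ := core t₁ t₂ C D hprod h2 h3 hC hD hN m
      (hdom m (le_trans (le_max_left _ _) hm)) ε hε z hz
    have habsG : |D * t₂ - C| = C - D * t₂ := by rw [abs_of_neg hGneg]; ring
    rw [habsG] at hR
    rw [hL]
    refine lt_of_le_of_lt hR ?_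
    have hε1 : ε < 1 := lt_of_lt_of_le hεlt (min_le_left _ _)
    have hεΘ : ε ≤ (C - D * t₂) * (t₂ + -t₁) /
        (2 * (D * (t₂ + -t₁) + (C - D * t₂) + (C * t₂ + D) + 1)) :=
      le_of_lt (lt_of_lt_of_le hεlt (min_le_right _ _))
    rw [le_div_iff₀ (by positivity)] at hεΘ
    have hmM₃ : (M₃:ℝ) ≤ (m:ℝ) := by
      exact_mod_cast le_trans (le_max_right M₂ M₃) hm
    have hr0 : (0:ℝ) < t₂ + ε := by linarith
    have hRT : t₂ ^ (m+1) ≤ (t₂ + ε) ^ (m+1) := pow_le_pow_left₀ ht2.le (by linarith) _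
    have hT1 : (1:ℝ) ≤ t₂ ^ (m+1) := one_le_pow₀ (by linarith)
    have hL1 : (-t₁) ^ (m+1) ≤ 1 := pow_le_one₀ hl0.le hl1.le
    have hL1p : (0:ℝ) ≤ (-t₁) ^ (m+1) := pow_nonneg hl0.le _
    -- Bernoulli : F1
    have hy : (t₂ + ε) * (ε / (t₂ + ε)) = ε := by field_simp
    have hb : 1 + ((m+1 : ℕ):ℝ) * (ε / (t₂ + ε)) ≤ (1 + ε / (t₂ + ε)) ^ (m+1) :=
      one_add_mul_le_pow (le_trans (by norm_num : (-2:ℝ) ≤ 0) (by positivity)) (m+1)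
    have F1 : t₂ ^ (m+1) * ((t₂ + ε) + ((m:ℝ)+1) * ε) ≤ (t₂ + ε) ^ (m+1) * (t₂ + ε) := by
      have h1' : t₂ * (1 + ε / (t₂ + ε)) ≤ t₂ + ε := by nlinarith
      have e0 : t₂ ^ (m+1) * ((t₂ + ε) + ((m:ℝ)+1) * ε)
          = t₂ ^ (m+1) * ((t₂ + ε) * (1 + ((m+1 : ℕ):ℝ) * (ε / (t₂ + ε)))) := by
        push_cast
        linear_combination (t₂ ^ (m+1) * ((m:ℝ)+1)) * hy.symm
      rw [e0]
      calc t₂ ^ (m+1) * ((t₂ + ε) * (1 + ((m+1 : ℕ):ℝ) * (ε / (t₂ + ε))))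
          ≤ t₂ ^ (m+1) * ((t₂ + ε) * (1 + ε / (t₂ + ε)) ^ (m+1)) := by gcongr
        _ = (t₂ + ε) * (t₂ * (1 + ε / (t₂ + ε))) ^ (m+1) := by rw [mul_pow]; ring
        _ ≤ (t₂ + ε) * (t₂ + ε) ^ (m+1) := by gcongr
        _ = (t₂ + ε) ^ (m+1) * (t₂ + ε) := by ring
    -- F2
    have f1 : (D * (t₂ + -t₁) + (C - D * t₂) + (C * t₂ + D) + 1) * (t₂ + ε)
        ≤ (D * (t₂ + -t₁) + (C - D * t₂) + (C * t₂ + D) + 1) * (t₂ + 1) :=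
      mul_le_mul_of_nonneg_left (by linarith) hΘ.le
    have hq2 : (M₃:ℝ) * ((C - D * t₂) * (t₂ + -t₁)) ≤ (m:ℝ) * ((C - D * t₂) * (t₂ + -t₁)) :=
      mul_le_mul_of_nonneg_right hmM₃ hden.le
    have hq3 : ((m:ℝ)+1) * ((D * (t₂ + -t₁) + (C - D * t₂) + (C * t₂ + D) + 1) * ε)
        ≤ ((m:ℝ)+1) * ((C - D * t₂) * (t₂ + -t₁) / 2) := by
      apply mul_le_mul_of_nonneg_left _ (by positivity)
      linarith
    have F2 : (D * (t₂ + -t₁) + (C - D * t₂) + (C * t₂ + D) + 1) * ((t₂ + ε) + ((m:ℝ)+1) * ε)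
        ≤ (C - D * t₂) * ((m:ℝ)+1) * (t₂ + -t₁) := by nlinarith [f1, hq2, hq3, hden]
    have harith := branchB_arith t₂ (-t₁) (C - D * t₂) (C * t₂ + D) D ε
      ((t₂ + ε) ^ (m+1)) (t₂ ^ (m+1)) ((-t₁) ^ (m+1)) (‖(C:ℂ) + D * z‖)
      ((m:ℝ)+1) hl0 hl1.le h3 hε hg hN hD (by positivity) hT1 hRT hL1p hL1 F1
      (by linarith [F2])
      (by linarith [hK2])
    linarith [harith]
  · -- Branch A : 0 < D*t₂ - C
    refine ⟨M₂, 1, one_pos, ?_⟩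
    intro m hm ε hε hε1 z hz
    obtain ⟨hR, hL, hK1, hK2⟩ := core t₁ t₂ C D hprod h2 h3 hC hD hN m
      (hdom m hm) ε hε z hz
    have habsG : |D * t₂ - C| = D * t₂ - C := abs_of_pos hGpos
    rw [habsG] at hR
    rw [hL]
    refine lt_of_le_of_lt hR ?_
    have hr0 : (0:ℝ) < t₂ + ε := by linarith
    have hRT : t₂ ^ (m+1) ≤ (t₂ + ε) ^ (m+1) := pow_le_pow_left₀ ht2.le (by linarith) _
    have hT2T : t₂ ≤ t₂ ^ (m+1) := by
      calc t₂ = t₂ ^ 1 := (pow_one _).symm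
        _ ≤ t₂ ^ (m+1) := pow_le_pow_right₀ (by linarith) (by omega)
    have hL1 : (-t₁) ^ (m+1) ≤ 1 := pow_le_one₀ hl0.le hl1.le
    have hL1p : (0:ℝ) ≤ (-t₁) ^ (m+1) := pow_nonneg hl0.le _
    have hDpos : 0 < D := by nlinarith
    have harith := branchA_arith t₂ (-t₁) C D ε
      ((t₂ + ε) ^ (m+1)) (t₂ ^ (m+1)) ((-t₁) ^ (m+1)) (‖(C:ℂ) + D * z‖)
      hlt2 hl0 hl1 h3 hC hDpos hε hRT hT2T hL1p hL1 hGpos (by linarith [hK1])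
    linarith [harith]


theorem rouche_ineq_ac_neg
    (t₁ t₂ C D : ℝ) (hprod : t₁ * t₂ = -1)
    (h1 : -1 < t₁) (h2 : t₁ < 0) (h3 : 1 < t₂)
    (hCD : C * D ≥ 0) (hCt1D : C * t₁ + D ≠ 0) :
    ∃ M : ℕ, ∃ ε₀ > (0 : ℝ), ∀ m ≥ M, ∀ ε : ℝ, 0 < ε → ε < ε₀ →
      ∀ z : ℂ, ‖z‖ = t₂ + ε →
        ‖z ^ (m + 1) * ((t₁ : ℂ) - t₂) * ((C : ℂ) + D * z)‖
          > ‖(t₂ : ℂ) ^ (m + 1) * (1 - z * t₂) * ((C : ℂ) * t₁ + D)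
              + (t₁ : ℂ) ^ (m + 1) * (z * t₁ - 1) * ((C : ℂ) * t₂ + D)‖ := by
  have ht2 : (0:ℝ) < t₂ := by linarith
  have hkey : D * t₂ - C = t₂ * (C * t₁ + D) := by linear_combination (-C) * hprod
  have hG : D * t₂ - C ≠ 0 := by
    rw [hkey]
    exact mul_ne_zero (ne_of_gt ht2) hCt1D
  have hcases : (0 ≤ C ∧ 0 ≤ D) ∨ (C ≤ 0 ∧ D ≤ 0) := by
    rcases le_or_gt 0 C with hC | hC <;> rcases le_or_gt 0 D with hD | hD
    · exact Or.inl ⟨hC, hD⟩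
    · exact Or.inr ⟨by nlinarith, hD.le⟩
    · exact Or.inr ⟨hC.le, by nlinarith⟩
    · exact Or.inr ⟨hC.le, hD.le⟩
  rcases hcases with ⟨hC, hD⟩ | ⟨hC, hD⟩
  · exact aux t₁ t₂ C D hprod h1 h2 h3 hC hD hG
  · have hG' : (-D) * t₂ - (-C) ≠ 0 := by
      intro h0; apply hG; linarith [h0.ge, h0.le]
    obtain ⟨M, ε₀, hε₀, H⟩ := aux t₁ t₂ (-C) (-D) hprod h1 h2 h3
      (by linarith) (by linarith) hG'
    refine ⟨M, ε₀, hε₀, ?_⟩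
    intro m hm ε hε hεlt z hz
    have h := H m hm ε hε hεlt z hz
    have eL : ‖z ^ (m+1) * ((t₁:ℂ) - t₂) * (((-C:ℝ):ℂ) + ((-D:ℝ):ℂ) * z)‖
        = ‖z ^ (m+1) * ((t₁:ℂ) - t₂) * ((C:ℂ) + D * z)‖ := by
      rw [show (z ^ (m+1) * ((t₁:ℂ) - t₂) * (((-C:ℝ):ℂ) + ((-D:ℝ):ℂ) * z))
          = -(z ^ (m+1) * ((t₁:ℂ) - t₂) * ((C:ℂ) + D * z)) by push_cast; ring,
        norm_neg]
    have eR : ‖(t₂:ℂ) ^ (m+1) * (1 - z * t₂) * (((-C:ℝ):ℂ) * t₁ + ((-D:ℝ):ℂ))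
          + (t₁:ℂ) ^ (m+1) * (z * t₁ - 1) * (((-C:ℝ):ℂ) * t₂ + ((-D:ℝ):ℂ))‖
        = ‖(t₂:ℂ) ^ (m+1) * (1 - z * t₂) * ((C:ℂ) * t₁ + D)
          + (t₁:ℂ) ^ (m+1) * (z * t₁ - 1) * ((C:ℂ) * t₂ + D)‖ := by
      rw [show ((t₂:ℂ) ^ (m+1) * (1 - z * t₂) * (((-C:ℝ):ℂ) * t₁ + ((-D:ℝ):ℂ))
          + (t₁:ℂ) ^ (m+1) * (z * t₁ - 1) * (((-C:ℝ):ℂ) * t₂ + ((-D:ℝ):ℂ)))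
          = -((t₂:ℂ) ^ (m+1) * (1 - z * t₂) * ((C:ℂ) * t₁ + D)
          + (t₁:ℂ) ^ (m+1) * (z * t₁ - 1) * ((C:ℂ) * t₂ + D)) by push_cast; ring,
        norm_neg]
    rw [eL, eR] at h
    exact h
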